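/- Let {x_k}, {Δ_k} be generated by the TRFD algorithm, assume each component F_i is convex, h is monotone, f has a global minimizer x* on Ω with D_0 := sup{‖x − x*‖_p : x ∈ Ω, f(x) ≤ f(x_0)} < ∞, and Δ_* ≥ D_0. If f(x_k) − f(x*) > Δ_* ε for k = 0,...,T−1, then (1/Δ_k)(f(x_k) − f(x*)) ≤ β for k = 0,...,T, where β := max{ (1/Δ_0)(f(x_0) − f(x*)), 2(L_J/σ + 1) Δ_* L_{h,p} L_J c_{p,2}(m) c_{2,p}(n)² / ((1−α)θ) }. -/

import Mathlib

open scoped ENNReal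

noncomputable section

/-- The `p`-norm on `ℝ^n`, for `p ∈ [1,∞]`. -/
def pNorm (p : ℝ≥0∞) {n : ℕ} (x : Fin n → ℝ) : ℝ :=
  if p = ∞ then ⨆ i, |x i| else (∑ i, |x i| ^ p.toReal) ^ (1 / p.toReal)

/-- The Euclidean norm on `ℝ^n`. -/
def eucNorm {n : ℕ} (x : Fin n → ℝ) : ℝ := Real.sqrt (∑ i, x i ^ 2)

/-- The operator norm of a matrix, induced by Euclidean norms. -/
def opNorm2 {m n : ℕ} (A : Matrix (Fin m) (Fin n) ℝ) : ℝ :=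
  sSup ((fun v => eucNorm (A.mulVec v)) '' {v | eucNorm v ≤ 1})

/-- Forward finite-difference approximation of the Jacobian of `F` at `x` with stepsize `τ`:
the `j`-th column is `(F (x + τ e_j) - F x) / τ`. -/
def fdMatrix {n m : ℕ} (F : (Fin n → ℝ) → (Fin m → ℝ)) (x : Fin n → ℝ) (τ : ℝ) :
    Matrix (Fin m) (Fin n) ℝ :=
  Matrix.of fun i j => (F (x + Pi.single j τ) i - F x i) / τ

/-- Stationarity measure `ψ_{p,r}(x)`. -/
def psi {n m : ℕ} (Ω : Set (Fin n → ℝ)) (F : (Fin n → ℝ) → (Fin m → ℝ))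
    (h : (Fin m → ℝ) → ℝ) (J : (Fin n → ℝ) → Matrix (Fin m) (Fin n) ℝ)
    (p : ℝ≥0∞) (r : ℝ) (x : Fin n → ℝ) : ℝ :=
  r⁻¹ * (h (F x) -
    sInf ((fun s => h (F x + (J x).mulVec s)) '' {s | x + s ∈ Ω ∧ pNorm p s ≤ r}))

/-- Approximate stationarity measure `η_{p,r}(x; A)`. -/
def eta {n m : ℕ} (Ω : Set (Fin n → ℝ)) (F : (Fin n → ℝ) → (Fin m → ℝ))
    (h : (Fin m → ℝ) → ℝ) (p : ℝ≥0∞) (r : ℝ) (x : Fin n → ℝ)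
    (A : Matrix (Fin m) (Fin n) ℝ) : ℝ :=
  r⁻¹ * (h (F x) -
    sInf ((fun s => h (F x + A.mulVec s)) '' {s | x + s ∈ Ω ∧ pNorm p s ≤ r}))

/-- The TRFD algorithm: `x`, `τ`, `Δ`, `A`, `d`, `ρ` are the iterates, finite-difference
stepsizes, trust-region radii, finite-difference Jacobian approximations, trial steps and
ratios generated by TRFD with parameters `ε, σ, α, θ, Δstar` from the point `x 0`. -/
def TRFDrun {n m : ℕ} (Ω : Set (Fin n → ℝ)) (F : (Fin n → ℝ) → (Fin m → ℝ))
    (h : (Fin m → ℝ) → ℝ) (p : ℝ≥0∞)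
    (Lh cpm cnp ε σ α θ Δstar : ℝ)
    (x : ℕ → Fin n → ℝ) (τ Δ : ℕ → ℝ) (A : ℕ → Matrix (Fin m) (Fin n) ℝ)
    (d : ℕ → Fin n → ℝ) (ρ : ℕ → ℝ) : Prop :=
  x 0 ∈ Ω ∧
  τ 0 = ε / (Lh * σ * cpm * cnp * Real.sqrt n) ∧
  τ 0 * Real.sqrt n ≤ Δ 0 ∧ Δ 0 ≤ Δstar ∧
  (∀ k, A k = fdMatrix F (x k) (τ k)) ∧
  (∀ k,
    -- unsuccessful iteration of type I
    (eta Ω F h p Δstar (x k) (A k) < ε / 2 ∧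
      x (k + 1) = x k ∧ Δ (k + 1) = Δ k ∧ τ (k + 1) = τ k / 2) ∨
    (ε / 2 ≤ eta Ω F h p Δstar (x k) (A k) ∧
      -- the trial step is feasible and achieves a `θ`-fraction of the optimal model decrease
      pNorm p (d k) ≤ Δ k ∧ x k + d k ∈ Ω ∧
      θ * (h (F (x k)) -
          sInf ((fun s => h (F (x k) + (A k).mulVec s)) ''
            {s | x k + s ∈ Ω ∧ pNorm p s ≤ Δ k})) ≤
        h (F (x k)) - h (F (x k) + (A k).mulVec (d k)) ∧
      ρ k = (h (F (x k)) - h (F (x k + d k))) /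
            (h (F (x k)) - h (F (x k) + (A k).mulVec (d k))) ∧
      -- successful iteration
      ((α ≤ ρ k ∧ x (k + 1) = x k + d k ∧ Δ (k + 1) = min (2 * Δ k) Δstar ∧
          τ (k + 1) = τ k) ∨
      -- unsuccessful iteration of type II
       (ρ k < α ∧ τ k * Real.sqrt n ≤ Δ k / 2 ∧
          x (k + 1) = x k ∧ Δ (k + 1) = Δ k / 2 ∧ τ (k + 1) = τ k) ∨
      -- unsuccessful iteration of type III
       (ρ k < α ∧ Δ k / 2 < τ k * Real.sqrt n ∧
          x (k + 1) = x k ∧ Δ (k + 1) = Δ k / 2 ∧ τ (k + 1) = τ k / 2))))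

section TRFDhelpers

lemma eucNorm_eq' {k : ℕ} (v : Fin k → ℝ) :
    eucNorm v = ‖(WithLp.equiv 2 (Fin k → ℝ)).symm v‖ := by
  rw [EuclideanSpace.norm_eq]; simp [eucNorm, sq_abs]

lemma eucNorm_nonneg {k : ℕ} (v : Fin k → ℝ) : 0 ≤ eucNorm v := Real.sqrt_nonneg _

lemma eucNorm_zero {k : ℕ} : eucNorm (0 : Fin k → ℝ) = 0 := by simp [eucNorm]

lemma eucNorm_neg {k : ℕ} (v : Fin k → ℝ) : eucNorm (-v) = eucNorm v := by
  simp [eucNorm]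

lemma eucNorm_smul {k : ℕ} (t : ℝ) (v : Fin k → ℝ) : eucNorm (t • v) = |t| * eucNorm v := by
  rw [eucNorm_eq', eucNorm_eq', ← Real.norm_eq_abs]
  have : (WithLp.equiv 2 (Fin k → ℝ)).symm (t • v) =
      t • (WithLp.equiv 2 (Fin k → ℝ)).symm v := rfl
  rw [this, norm_smul]

lemma eucNorm_eq_zero {k : ℕ} {v : Fin k → ℝ} (h : eucNorm v = 0) : v = 0 := by
  rw [eucNorm_eq'] at h
  exact congrArg (WithLp.equiv 2 (Fin k → ℝ)) (norm_eq_zero.mp h)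

lemma eucNorm_sub_le {k : ℕ} (a b c : Fin k → ℝ) :
    eucNorm (a - c) ≤ eucNorm (a - b) + eucNorm (b - c) := by
  rw [eucNorm_eq', eucNorm_eq', eucNorm_eq']
  have : (WithLp.equiv 2 (Fin k → ℝ)).symm (a - c) =
      (WithLp.equiv 2 (Fin k → ℝ)).symm (a - b) + (WithLp.equiv 2 (Fin k → ℝ)).symm (b - c) := by
    ext i; simpa using (sub_add_sub_cancel (a i) (b i) (c i)).symm
  rw [this]; exact norm_add_le _ _

/-- Frobenius norm of a matrix. -/
def frob {m n : ℕ} (A : Matrix (Fin m) (Fin n) ℝ) : ℝ := Real.sqrt (∑ i, ∑ j, A i j ^ 2)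

lemma frob_nonneg {m n : ℕ} (A : Matrix (Fin m) (Fin n) ℝ) : 0 ≤ frob A := Real.sqrt_nonneg _

lemma eucNorm_mulVec_le_frob {m n : ℕ} (A : Matrix (Fin m) (Fin n) ℝ) (v : Fin n → ℝ) :
    eucNorm (A.mulVec v) ≤ frob A * eucNorm v := by
  rw [eucNorm, eucNorm, frob, ← Real.sqrt_mul (by positivity)]
  apply Real.sqrt_le_sqrt
  rw [Finset.sum_mul]
  apply Finset.sum_le_sum
  intro i _
  calc (A.mulVec v i) ^ 2 = (∑ j, A i j * v j) ^ 2 := by rfl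
    _ ≤ (∑ j, A i j ^ 2) * ∑ j, v j ^ 2 := Finset.sum_mul_sq_le_sq_mul_sq _ _ _

lemma bddAbove_opSet {m n : ℕ} (A : Matrix (Fin m) (Fin n) ℝ) :
    BddAbove ((fun v => eucNorm (A.mulVec v)) '' {v | eucNorm v ≤ 1}) := by
  refine ⟨frob A, ?_⟩
  rintro _ ⟨w, hw, rfl⟩
  calc eucNorm (A.mulVec w) ≤ frob A * eucNorm w := eucNorm_mulVec_le_frob A w
    _ ≤ frob A * 1 := mul_le_mul_of_nonneg_left hw (frob_nonneg A)
    _ = frob A := mul_one _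

lemma eucNorm_mulVec_le_op {m n : ℕ} (A : Matrix (Fin m) (Fin n) ℝ) (v : Fin n → ℝ) :
    eucNorm (A.mulVec v) ≤ opNorm2 A * eucNorm v := by
  rcases eq_or_ne v 0 with rfl | hv
  · simp [Matrix.mulVec_zero, eucNorm_zero]
  · have hc : 0 < eucNorm v := by
      rcases lt_or_eq_of_le (eucNorm_nonneg v) with h | h
      · exact h
      · exact absurd (eucNorm_eq_zero h.symm) hv
    have hu : eucNorm ((eucNorm v)⁻¹ • v) ≤ 1 := by
      rw [eucNorm_smul, abs_of_nonneg (by positivity), inv_mul_cancel₀ hc.ne']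
    have hmem : eucNorm (A.mulVec ((eucNorm v)⁻¹ • v)) ∈
        (fun v => eucNorm (A.mulVec v)) '' {v | eucNorm v ≤ 1} := ⟨_, hu, rfl⟩
    have h2 := le_csSup (bddAbove_opSet A) hmem
    rw [Matrix.mulVec_smul, eucNorm_smul, abs_of_nonneg (by positivity)] at h2
    calc eucNorm (A.mulVec v) = eucNorm v * ((eucNorm v)⁻¹ * eucNorm (A.mulVec v)) := by
          field_simp
      _ ≤ eucNorm v * opNorm2 A := mul_le_mul_of_nonneg_left h2 hc.le
      _ = opNorm2 A * eucNorm v := mul_comm _ _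

lemma toReal_pos {p : ℝ≥0∞} (hp : 1 ≤ p) (hip : p ≠ ∞) : 0 < p.toReal := by
  have h1 : (1:ℝ≥0∞).toReal ≤ p.toReal := ENNReal.toReal_mono hip hp
  simpa using lt_of_lt_of_le one_pos (by simpa using h1)

lemma pNorm_zero {k : ℕ} {p : ℝ≥0∞} (hp : 1 ≤ p) : pNorm p (0 : Fin k → ℝ) = 0 := by
  unfold pNorm
  split_ifs with h
  · simp
  · rw [show (∑ i : Fin k, |(0 : Fin k → ℝ) i| ^ p.toReal) = 0 by
      simp [Real.zero_rpow (toReal_pos hp h).ne']]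
    exact Real.zero_rpow (by
      rw [one_div]; exact inv_ne_zero (toReal_pos hp h).ne')

lemma pNorm_nonneg {k : ℕ} {p : ℝ≥0∞} (x : Fin k → ℝ) : 0 ≤ pNorm p x := by
  unfold pNorm
  split_ifs with h
  · exact Real.iSup_nonneg fun i => abs_nonneg _
  · positivity

lemma pNorm_neg {k : ℕ} {p : ℝ≥0∞} (x : Fin k → ℝ) : pNorm p (-x) = pNorm p x := by
  unfold pNorm; simp

lemma pNorm_smul {k : ℕ} {p : ℝ≥0∞} (hp : 1 ≤ p) (t : ℝ) (x : Fin k → ℝ) :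
    pNorm p (t • x) = |t| * pNorm p x := by
  unfold pNorm
  split_ifs with h
  · rw [Real.mul_iSup_of_nonneg (abs_nonneg t)]
    congr 1; funext i; simp [abs_mul]
  · have hq := toReal_pos hp h
    have key : ∀ i : Fin k, |(t • x) i| ^ p.toReal = |t| ^ p.toReal * |x i| ^ p.toReal := by
      intro i
      simp only [Pi.smul_apply, smul_eq_mul, abs_mul]
      exact Real.mul_rpow (abs_nonneg _) (abs_nonneg _)
    rw [Finset.sum_congr rfl (fun i _ => key i), ← Finset.mul_sum,
      Real.mul_rpow (by positivity) (by positivity)]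
    congr 1
    rw [← Real.rpow_mul (abs_nonneg t), mul_one_div, div_self hq.ne', Real.rpow_one]

lemma eucNorm_single {k : ℕ} (j : Fin k) (t : ℝ) : eucNorm (Pi.single j t) = |t| := by
  unfold eucNorm
  rw [show (∑ i, Pi.single j t i ^ 2) = t ^ 2 by
    rw [Finset.sum_eq_single j]
    · simp
    · intro b _ hb; simp [Pi.single_apply, hb]
    · simp]
  exact Real.sqrt_sq_eq_abs t

lemma entry_le_op {m n : ℕ} {A : Matrix (Fin m) (Fin n) ℝ} (i : Fin m) (j : Fin n) :
    |A i j| ≤ opNorm2 A := by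
  have h1 : |A i j| ≤ eucNorm (A.mulVec (Pi.single j 1)) := by
    have he : A.mulVec (Pi.single j 1) i = A i j := by
      simp [Matrix.mulVec, dotProduct, Pi.single_apply, mul_ite]
    rw [← he, eucNorm, ← Real.sqrt_sq_eq_abs]
    apply Real.sqrt_le_sqrt
    exact Finset.single_le_sum (f := fun i => A.mulVec (Pi.single j 1) i ^ 2)
      (fun i _ => sq_nonneg _) (Finset.mem_univ i)
  calc |A i j| ≤ eucNorm (A.mulVec (Pi.single j 1)) := h1
    _ ≤ opNorm2 A * eucNorm (Pi.single j 1) := eucNorm_mulVec_le_op _ _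
    _ = opNorm2 A := by rw [eucNorm_single]; simp

section quadsec
variable {n m : ℕ}
  (F : (Fin n → ℝ) → (Fin m → ℝ)) (J : (Fin n → ℝ) → Matrix (Fin m) (Fin n) ℝ)
  (hJ : ∀ y, HasFDerivAt F (LinearMap.toContinuousLinearMap (Matrix.mulVecLin (J y))) y)
  (LJ : ℝ) (hLJ : 0 < LJ)
  (hJLip : ∀ y z, opNorm2 (J y - J z) ≤ LJ * eucNorm (y - z))

include hJ hLJ hJLip in
lemma quad_bound (y d : Fin n → ℝ) :
    eucNorm (F (y + d) - F y - (J y).mulVec d) ≤ LJ / 2 * eucNorm d ^ 2 := by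
  set T : (Fin m → ℝ) ≃L[ℝ] EuclideanSpace ℝ (Fin m) :=
    (PiLp.continuousLinearEquiv 2 ℝ (fun _ : Fin m => ℝ)).symm with hT
  have hTnorm : ∀ v : Fin m → ℝ, eucNorm v = ‖T v‖ := fun v => eucNorm_eq' v
  have hline : ∀ t : ℝ, HasDerivAt (fun s : ℝ => y + s • d) d t := by
    intro t
    simpa using ((hasDerivAt_id t).smul_const d).const_add y
  have hF : ∀ t : ℝ, HasDerivAt (fun s : ℝ => F (y + s • d)) ((J (y + t • d)).mulVec d) t := by
    intro t
    have := (hJ (y + t • d)).comp_hasDerivAt t (hline t)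
    simpa [Function.comp_def] using this
  set c : EuclideanSpace ℝ (Fin m) := T ((J y).mulVec d) with hc
  set g : ℝ → EuclideanSpace ℝ (Fin m) := fun t => T (F (y + t • d)) - t • c with hg
  set g' : ℝ → EuclideanSpace ℝ (Fin m) :=
    fun t => T (((J (y + t • d)) - J y).mulVec d) with hg'
  have hgderiv : ∀ t : ℝ, HasDerivAt g (g' t) t := by
    intro t
    have h1 : HasDerivAt (fun s => T (F (y + s • d))) (T ((J (y + t • d)).mulVec d)) t :=
      (T.toContinuousLinearMap.hasFDerivAt).comp_hasDerivAt t (hF t)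
    have h2 : HasDerivAt (fun s : ℝ => s • c) c t := by
      simpa using (hasDerivAt_id t).smul_const c
    have h3 := h1.sub h2
    convert h3 using 1
    show T ((J (y + t • d) - J y).mulVec d) = T ((J (y + t • d)).mulVec d) - c
    rw [Matrix.sub_mulVec, map_sub, hc]
    all_goals rfl
  have hJentry : ∀ (i : Fin m) (j : Fin n), Continuous fun t : ℝ => J (y + t • d) i j := by
    intro i j
    rw [Metric.continuous_iff]
    intro t ε hε
    rcases eq_or_ne d 0 with rfl | hd
    · exact ⟨1, one_pos, fun a _ => by simpa using hε⟩
    · have hden : 0 < LJ * eucNorm d := by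
        apply mul_pos hLJ
        rcases lt_or_eq_of_le (eucNorm_nonneg d) with h | h
        · exact h
        · exact absurd (eucNorm_eq_zero h.symm) hd
      refine ⟨ε / (LJ * eucNorm d), by positivity, fun a ha => ?_⟩
      have hb : |J (y + a • d) i j - J (y + t • d) i j| ≤ LJ * eucNorm d * |a - t| := by
        have h1 : |(J (y + a • d) - J (y + t • d)) i j|
            ≤ opNorm2 (J (y + a • d) - J (y + t • d)) := entry_le_op i j
        have h2 := hJLip (y + a • d) (y + t • d)
        have h3 : y + a • d - (y + t • d) = (a - t) • d := by
          funext l; simp [sub_smul]; ring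
        rw [h3, eucNorm_smul] at h2
        have h4 : (J (y + a • d) - J (y + t • d)) i j
            = J (y + a • d) i j - J (y + t • d) i j := rfl
        rw [h4] at h1
        calc |J (y + a • d) i j - J (y + t • d) i j| ≤ LJ * (|a - t| * eucNorm d) :=
              le_trans h1 h2
          _ = LJ * eucNorm d * |a - t| := by ring
      have hat : |a - t| < ε / (LJ * eucNorm d) := by
        rw [Real.dist_eq] at ha; exact ha
      rw [Real.dist_eq]
      calc |J (y + a • d) i j - J (y + t • d) i j| ≤ LJ * eucNorm d * |a - t| := hb
        _ < LJ * eucNorm d * (ε / (LJ * eucNorm d)) := mul_lt_mul_of_pos_left hat hden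
        _ = ε := by
          have hd0 : eucNorm d ≠ 0 := fun h0 => by simp [h0] at hden
          field_simp
  have hg'cont : Continuous g' := by
    apply T.continuous.comp
    apply continuous_pi
    intro i
    show Continuous fun t : ℝ => ∑ j, (J (y + t • d) - J y) i j * d j
    apply continuous_finset_sum
    intro j _
    exact (((hJentry i j).sub continuous_const).mul continuous_const)
  have hint : IntervalIntegrable g' MeasureTheory.volume 0 1 := hg'cont.intervalIntegrable 0 1
  have hftc := intervalIntegral.integral_eq_sub_of_hasDerivAt
    (f := g) (f' := g') (a := 0) (b := 1) (fun t _ => hgderiv t) hint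
  have hval : g 1 - g 0 = T (F (y + d) - F y - (J y).mulVec d) := by
    rw [hg]
    simp only [one_smul, zero_smul, sub_zero]
    rw [map_sub, map_sub]
    simp only [hc]
    abel
  have hbound : ‖∫ t in (0:ℝ)..1, g' t‖ ≤ |∫ t in (0:ℝ)..1, LJ * eucNorm d ^ 2 * t| := by
    apply intervalIntegral.norm_integral_le_abs_of_norm_le
    · rw [MeasureTheory.ae_restrict_iff' measurableSet_uIoc]
      apply MeasureTheory.ae_of_all
      intro t ht
      rw [Set.uIoc_of_le (by norm_num : (0:ℝ) ≤ 1)] at ht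
      have ht0 : 0 < t := ht.1
      have h1 : ‖g' t‖ = eucNorm (((J (y + t • d)) - J y).mulVec d) := (hTnorm _).symm
      rw [h1]
      calc eucNorm (((J (y + t • d)) - J y).mulVec d)
          ≤ opNorm2 ((J (y + t • d)) - J y) * eucNorm d := eucNorm_mulVec_le_op _ _
        _ ≤ LJ * eucNorm (y + t • d - y) * eucNorm d :=
            mul_le_mul_of_nonneg_right (hJLip _ _) (eucNorm_nonneg d)
        _ = LJ * (t * eucNorm d) * eucNorm d := by
            rw [show y + t • d - y = t • d by abel, eucNorm_smul, abs_of_pos ht0]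
        _ = LJ * eucNorm d ^ 2 * t := by ring
    · exact (Continuous.intervalIntegrable (by continuity) 0 1)
  have hintval : (∫ t in (0:ℝ)..1, LJ * eucNorm d ^ 2 * t) = LJ / 2 * eucNorm d ^ 2 := by
    rw [intervalIntegral.integral_const_mul, integral_id]
    ring
  rw [hftc, hval] at hbound
  rw [hTnorm]
  rw [hintval] at hbound
  calc ‖T (F (y + d) - F y - (J y).mulVec d)‖ ≤ |LJ / 2 * eucNorm d ^ 2| := hbound
    _ = LJ / 2 * eucNorm d ^ 2 := abs_of_nonneg (by positivity)

include hLJ in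
lemma fd_err
    (hquad : ∀ y d : Fin n → ℝ,
      eucNorm (F (y + d) - F y - (J y).mulVec d) ≤ LJ / 2 * eucNorm d ^ 2)
    {x : Fin n → ℝ} {τ : ℝ} (hτ : 0 < τ) (v : Fin n → ℝ) :
    eucNorm ((fdMatrix F x τ - J x).mulVec v) ≤ Real.sqrt n * (LJ * τ / 2) * eucNorm v := by
  have hfrob : frob (fdMatrix F x τ - J x) ≤ Real.sqrt n * (LJ * τ / 2) := by
    have hcol : ∀ j : Fin n, ∑ i, (fdMatrix F x τ - J x) i j ^ 2 ≤ (LJ * τ / 2) ^ 2 := by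
      intro j
      set u : Fin n → ℝ := Pi.single j τ with hu
      have hcolv : ∀ i : Fin m, (fdMatrix F x τ - J x) i j
          = τ⁻¹ * ((F (x + u) - F x - (J x).mulVec u) i) := by
        intro i
        have hmv : (J x).mulVec u i = J x i j * τ := by
          simp [Matrix.mulVec, dotProduct, hu, Pi.single_apply, mul_ite]
        show (F (x + u) i - F x i) / τ - J x i j = _
        simp only [Pi.sub_apply, hmv]
        field_simp
      have herr := hquad x u
      have hu2 : eucNorm u = τ := by rw [hu, eucNorm_single, abs_of_pos hτ]
      rw [hu2] at herr
      have h2 : ∑ i, (fdMatrix F x τ - J x) i j ^ 2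
          = τ⁻¹ ^ 2 * ∑ i, ((F (x + u) - F x - (J x).mulVec u) i) ^ 2 := by
        rw [Finset.mul_sum]
        apply Finset.sum_congr rfl
        intro i _
        rw [hcolv i]; ring
      rw [h2]
      have h3 : ∑ i, ((F (x + u) - F x - (J x).mulVec u) i) ^ 2
          ≤ (LJ / 2 * τ ^ 2) ^ 2 := by
        calc ∑ i, ((F (x + u) - F x - (J x).mulVec u) i) ^ 2
            = eucNorm (F (x + u) - F x - (J x).mulVec u) ^ 2 := by
              rw [eucNorm, Real.sq_sqrt (by positivity)]
          _ ≤ (LJ / 2 * τ ^ 2) ^ 2 := pow_le_pow_left₀ (eucNorm_nonneg _) herr 2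
      calc τ⁻¹ ^ 2 * ∑ i, ((F (x + u) - F x - (J x).mulVec u) i) ^ 2
          ≤ τ⁻¹ ^ 2 * (LJ / 2 * τ ^ 2) ^ 2 := mul_le_mul_of_nonneg_left h3 (by positivity)
        _ = (LJ * τ / 2) ^ 2 := by field_simp
    rw [frob]
    have hswap : ∑ i, ∑ j, (fdMatrix F x τ - J x) i j ^ 2
        = ∑ j, ∑ i, (fdMatrix F x τ - J x) i j ^ 2 := Finset.sum_comm
    rw [hswap]
    calc Real.sqrt (∑ j, ∑ i, (fdMatrix F x τ - J x) i j ^ 2)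
        ≤ Real.sqrt (∑ _j : Fin n, (LJ * τ / 2) ^ 2) := by
          apply Real.sqrt_le_sqrt
          exact Finset.sum_le_sum fun j _ => hcol j
      _ = Real.sqrt n * (LJ * τ / 2) := by
          rw [Finset.sum_const, Finset.card_univ, Fintype.card_fin, nsmul_eq_mul,
            Real.sqrt_mul (by positivity), Real.sqrt_sq (by positivity)]
  calc eucNorm ((fdMatrix F x τ - J x).mulVec v)
      ≤ frob (fdMatrix F x τ - J x) * eucNorm v := eucNorm_mulVec_le_frob _ _
    _ ≤ Real.sqrt n * (LJ * τ / 2) * eucNorm v :=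
        mul_le_mul_of_nonneg_right hfrob (eucNorm_nonneg v)

include hJ in
lemma grad_ineq (hFconv : ∀ i, ConvexOn ℝ Set.univ (fun y => F y i))
    (y z : Fin n → ℝ) (i : Fin m) :
    F y i + (J y).mulVec (z - y) i ≤ F z i := by
  set φ : ℝ → ℝ := fun t => F (y + t • (z - y)) i with hφ
  have hline : ∀ t : ℝ, HasDerivAt (fun s : ℝ => y + s • (z - y)) (z - y) t := by
    intro t; simpa using ((hasDerivAt_id t).smul_const (z - y)).const_add y
  have hFd : ∀ t : ℝ, HasDerivAt (fun s : ℝ => F (y + s • (z - y)))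
      ((J (y + t • (z - y))).mulVec (z - y)) t := by
    intro t
    simpa [Function.comp_def] using (hJ (y + t • (z - y))).comp_hasDerivAt t (hline t)
  have hφd : HasDerivAt φ ((J y).mulVec (z - y) i) 0 := by
    have := (ContinuousLinearMap.proj (R := ℝ) (φ := fun _ : Fin m => ℝ)
      i).hasFDerivAt.comp_hasDerivAt 0 (hFd 0)
    simpa [Function.comp_def] using this
  have hφconv : ConvexOn ℝ Set.univ φ := by
    have hcomp := (hFconv i).comp_affineMap
      (AffineMap.lineMap y z : ℝ →ᵃ[ℝ] (Fin n → ℝ))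
    rw [Set.preimage_univ] at hcomp
    suffices hφeq : φ = (fun y => F y i) ∘ AffineMap.lineMap y z by rw [hφeq]; exact hcomp
    funext t
    show F (y + t • (z - y)) i = F (AffineMap.lineMap y z t) i
    rw [AffineMap.lineMap_apply]
    congr 1
    simp [vsub_eq_sub, vadd_eq_add]
    abel
  have hslope : ∀ t ∈ Set.Ioo (0:ℝ) 1, slope φ 0 t ≤ φ 1 - φ 0 := by
    intro t ht
    have hcvx := hφconv.2 (Set.mem_univ (0:ℝ)) (Set.mem_univ (1:ℝ))
      (by linarith [ht.2] : (0:ℝ) ≤ 1 - t) (le_of_lt ht.1) (by ring)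
    simp only [smul_eq_mul, mul_zero, mul_one, zero_add] at hcvx
    have h2 : φ t ≤ (1 - t) * φ 0 + t * φ 1 := hcvx
    have h3 : (φ t - φ 0) / (t - 0) ≤ φ 1 - φ 0 := by
      rw [sub_zero, div_le_iff₀ ht.1]
      nlinarith
    simpa [slope, sub_zero, div_eq_inv_mul] using h3
  have htend : Filter.Tendsto (slope φ 0) (nhdsWithin 0 (Set.Ioi 0))
      (nhds ((J y).mulVec (z - y) i)) :=
    (hasDerivAt_iff_tendsto_slope.mp hφd).mono_left
      (nhdsWithin_mono 0 (fun a ha => Set.mem_compl_singleton_iff.mpr (ne_of_gt ha)))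
  have hle : (J y).mulVec (z - y) i ≤ φ 1 - φ 0 := by
    apply le_of_tendsto htend
    filter_upwards [Ioo_mem_nhdsGT_of_mem (Set.mem_Ico.mpr ⟨le_refl (0:ℝ), one_pos⟩)] with t ht
    exact hslope t ht
  have hφ1 : φ 1 = F z i := by rw [hφ]; simp
  have hφ0 : φ 0 = F y i := by rw [hφ]; simp
  rw [hφ1, hφ0] at hle
  linarith
end quadsec
end TRFDhelpers


set_option maxHeartbeats 2000000 in
/-- Lemma 3.11: bound on the scaled functional residual. -/
theorem stmt16
    {n m : ℕ} (hn : 1 ≤ n) (hm : 1 ≤ m) (p : ℝ≥0∞) (hp : 1 ≤ p)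
    (Ω : Set (Fin n → ℝ)) (hΩne : Ω.Nonempty) (hΩcl : IsClosed Ω) (hΩcv : Convex ℝ Ω)
    (F : (Fin n → ℝ) → (Fin m → ℝ)) (J : (Fin n → ℝ) → Matrix (Fin m) (Fin n) ℝ)
    (hJ : ∀ y, HasFDerivAt F (LinearMap.toContinuousLinearMap (Matrix.mulVecLin (J y))) y)
    (LJ : ℝ) (hLJ : 0 < LJ)
    (hJLip : ∀ y z, opNorm2 (J y - J z) ≤ LJ * eucNorm (y - z))
    (h : (Fin m → ℝ) → ℝ) (hconv : ConvexOn ℝ Set.univ h)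
    (Lh : ℝ) (hLh : 0 < Lh)
    (hhLip : ∀ z w, |h z - h w| ≤ Lh * pNorm p (z - w))
    (cnp cpm : ℝ) (hcnp1 : 1 ≤ cnp) (hcpm1 : 1 ≤ cpm)
    (hcnp : ∀ v : Fin n → ℝ, eucNorm v ≤ cnp * pNorm p v)
    (hcpm : ∀ z : Fin m → ℝ, pNorm p z ≤ cpm * eucNorm z)
    (ε σ α θ Δstar : ℝ) (hε : 0 < ε) (hσ : 0 < σ)
    (hα0 : 0 < α) (hα1 : α < 1) (hθ0 : 0 < θ) (hθ1 : θ ≤ 1)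
    (x : ℕ → Fin n → ℝ) (τ Δ : ℕ → ℝ) (A : ℕ → Matrix (Fin m) (Fin n) ℝ)
    (d : ℕ → Fin n → ℝ) (ρ : ℕ → ℝ)
    (hrun : TRFDrun Ω F h p Lh cpm cnp ε σ α θ Δstar x τ Δ A d ρ)
    (hFconv : ∀ i, ConvexOn ℝ Set.univ (fun y => F y i))
    (hmono : ∀ u v : Fin m → ℝ, (∀ i, u i ≤ v i) → h u ≤ h v)
    (xstar : Fin n → ℝ) (hxstarΩ : xstar ∈ Ω)
    (hxstarmin : ∀ y ∈ Ω, h (F xstar) ≤ h (F y))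
    (D₀ : ℝ) (hD₀ : ∀ y ∈ Ω, h (F y) ≤ h (F (x 0)) → pNorm p (y - xstar) ≤ D₀)
    (hΔstarD₀ : D₀ ≤ Δstar)
    (T : ℕ) (hT : ∀ k < T, Δstar * ε < h (F (x k)) - h (F xstar)) :
    ∀ k ≤ T, (Δ k)⁻¹ * (h (F (x k)) - h (F xstar)) ≤
      max ((Δ 0)⁻¹ * (h (F (x 0)) - h (F xstar)))
        (2 * (LJ / σ + 1) * Δstar * Lh * LJ * cpm * cnp ^ 2 / ((1 - α) * θ)) := by
  obtain ⟨hx0, hτ0def, hΔ0lb, hΔ0star, hA, hstep⟩ := hrun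
  -- basic positivity
  have hnpos : (0:ℝ) < n := by exact_mod_cast hn
  have hsq : 0 < Real.sqrt n := Real.sqrt_pos.mpr hnpos
  have hcnp0 : (0:ℝ) < cnp := lt_of_lt_of_le one_pos hcnp1
  have hcpm0 : (0:ℝ) < cpm := lt_of_lt_of_le one_pos hcpm1
  have hτ0pos : 0 < τ 0 := by rw [hτ0def]; positivity
  have hΔ0pos : 0 < Δ 0 := lt_of_lt_of_le (by positivity) hΔ0lb
  have hΔstarpos : 0 < Δstar := lt_of_lt_of_le hΔ0pos hΔ0star
  have hquad : ∀ y d : Fin n → ℝ,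
      eucNorm (F (y + d) - F y - (J y).mulVec d) ≤ LJ / 2 * eucNorm d ^ 2 :=
    quad_bound F J hJ LJ hLJ hJLip
  have hgap : ∀ a b : Fin m → ℝ, h a - h b ≤ Lh * cpm * eucNorm (a - b) := by
    intro a b
    calc h a - h b ≤ |h a - h b| := le_abs_self _
      _ ≤ Lh * pNorm p (a - b) := hhLip a b
      _ ≤ Lh * (cpm * eucNorm (a - b)) := mul_le_mul_of_nonneg_left (hcpm _) hLh.le
      _ = Lh * cpm * eucNorm (a - b) := by ring
  -- the model infimum
  set M : ℕ → ℝ → ℝ := fun k r =>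
    sInf ((fun s => h (F (x k) + (A k).mulVec s)) '' {s | x k + s ∈ Ω ∧ pNorm p s ≤ r})
    with hM
  have hmem0 : ∀ k r, x k ∈ Ω → 0 ≤ r →
      h (F (x k)) ∈ ((fun s => h (F (x k) + (A k).mulVec s)) ''
        {s | x k + s ∈ Ω ∧ pNorm p s ≤ r}) := by
    intro k r hx hr
    exact ⟨0, ⟨by simpa using hx, by rw [pNorm_zero hp]; exact hr⟩,
      by simp [Matrix.mulVec_zero]⟩
  have hbddB : ∀ k r, 0 ≤ r → BddBelow ((fun s => h (F (x k) + (A k).mulVec s)) ''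
      {s | x k + s ∈ Ω ∧ pNorm p s ≤ r}) := by
    intro k r hr
    refine ⟨h (F (x k)) - Lh * cpm * (frob (A k) * (cnp * r)), ?_⟩
    rintro _ ⟨s, ⟨hsΩ, hsr⟩, rfl⟩
    have h1 : h (F (x k)) - h (F (x k) + (A k).mulVec s)
        ≤ Lh * cpm * eucNorm ((A k).mulVec s) := by
      have := hgap (F (x k)) (F (x k) + (A k).mulVec s)
      have he : F (x k) - (F (x k) + (A k).mulVec s) = -((A k).mulVec s) := by abel
      rw [he, eucNorm_neg] at this
      exact this
    have h2 : eucNorm ((A k).mulVec s) ≤ frob (A k) * (cnp * r) := by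
      calc eucNorm ((A k).mulVec s) ≤ frob (A k) * eucNorm s := eucNorm_mulVec_le_frob _ _
        _ ≤ frob (A k) * (cnp * r) := by
            apply mul_le_mul_of_nonneg_left _ (frob_nonneg _)
            calc eucNorm s ≤ cnp * pNorm p s := hcnp s
              _ ≤ cnp * r := mul_le_mul_of_nonneg_left hsr hcnp0.le
    have h3 : Lh * cpm * eucNorm ((A k).mulVec s) ≤ Lh * cpm * (frob (A k) * (cnp * r)) :=
      mul_le_mul_of_nonneg_left h2 (by positivity)
    linarith
  have hMle : ∀ k r s, 0 ≤ r → x k + s ∈ Ω → pNorm p s ≤ r →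
      M k r ≤ h (F (x k) + (A k).mulVec s) := by
    intro k r s hr h1 h2
    exact csInf_le (hbddB k r hr) ⟨s, ⟨h1, h2⟩, rfl⟩
  have hMlef : ∀ k r, x k ∈ Ω → 0 ≤ r → M k r ≤ h (F (x k)) := by
    intro k r hx hr
    exact csInf_le (hbddB k r hr) (hmem0 k r hx hr)
  -- scaling of the model decrease
  have hscale : ∀ k r R, x k ∈ Ω → 0 < r → r ≤ R →
      r / R * (h (F (x k)) - M k R) ≤ h (F (x k)) - M k r := by
    intro k r R hx hr hrR
    have hR : 0 < R := lt_of_lt_of_le hr hrR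
    set t := r / R with ht
    have ht0 : 0 < t := by positivity
    have ht1 : t ≤ 1 := (div_le_one hR).mpr hrR
    have hne : ((fun s => h (F (x k) + (A k).mulVec s)) ''
        {s | x k + s ∈ Ω ∧ pNorm p s ≤ R}).Nonempty := ⟨_, hmem0 k R hx hR.le⟩
    have key : (M k r - (1 - t) * h (F (x k))) / t ≤ M k R := by
      apply le_csInf hne
      rintro b ⟨s, ⟨hsΩ, hsR⟩, rfl⟩
      rw [div_le_iff₀ ht0]
      have hfeas1 : x k + t • s ∈ Ω := by
        have hcc := hΩcv hx hsΩ (by linarith : (0:ℝ) ≤ 1 - t) ht0.le (by ring)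
        have he : (1 - t) • x k + t • (x k + s) = x k + t • s := by
          funext i
          simp only [Pi.add_apply, Pi.smul_apply, smul_eq_mul]
          ring
        rwa [he] at hcc
      have hfeas2 : pNorm p (t • s) ≤ r := by
        rw [pNorm_smul hp, abs_of_pos ht0]
        calc t * pNorm p s ≤ t * R := mul_le_mul_of_nonneg_left hsR ht0.le
          _ = r := by rw [ht]; field_simp
      have h1 : M k r ≤ h (F (x k) + (A k).mulVec (t • s)) :=
        hMle k r (t • s) hr.le hfeas1 hfeas2
      have hcomb := hconv.2 (Set.mem_univ (F (x k)))
        (Set.mem_univ (F (x k) + (A k).mulVec s))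
        (by linarith : (0:ℝ) ≤ 1 - t) ht0.le (by ring)
      have heq : (1 - t) • F (x k) + t • (F (x k) + (A k).mulVec s)
          = F (x k) + (A k).mulVec (t • s) := by
        rw [Matrix.mulVec_smul]
        funext i
        simp only [Pi.add_apply, Pi.smul_apply, smul_eq_mul]
        ring
      rw [heq] at hcomb
      simp only [smul_eq_mul] at hcomb
      linarith
    rw [div_le_iff₀ ht0] at key
    linarith [key]
  -- actual decrease on successful iterations
  have hsucc : ∀ k, x k ∈ Ω → 0 < Δ k →
      (θ * (h (F (x k)) - M k (Δ k)) ≤ h (F (x k)) - h (F (x k) + (A k).mulVec (d k))) →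
      (ρ k = (h (F (x k)) - h (F (x k + d k))) /
        (h (F (x k)) - h (F (x k) + (A k).mulVec (d k)))) →
      α ≤ ρ k → h (F (x k + d k)) ≤ h (F (x k)) := by
    intro k hx hΔk hfrac hρdef hρα
    have hMl := hMlef k (Δ k) hx hΔk.le
    have hP0 : 0 ≤ h (F (x k)) - h (F (x k) + (A k).mulVec (d k)) := by
      have : 0 ≤ θ * (h (F (x k)) - M k (Δ k)) := mul_nonneg hθ0.le (by linarith)
      linarith
    have hPne : h (F (x k)) - h (F (x k) + (A k).mulVec (d k)) ≠ 0 := by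
      intro h0
      rw [h0, div_zero] at hρdef
      rw [hρdef] at hρα
      linarith
    have hPpos : 0 < h (F (x k)) - h (F (x k) + (A k).mulVec (d k)) :=
      lt_of_le_of_ne hP0 (Ne.symm hPne)
    have hared : h (F (x k)) - h (F (x k + d k))
        = ρ k * (h (F (x k)) - h (F (x k) + (A k).mulVec (d k))) := by
      rw [hρdef]; field_simp
    have h1 : α * (h (F (x k)) - h (F (x k) + (A k).mulVec (d k)))
        ≤ ρ k * (h (F (x k)) - h (F (x k) + (A k).mulVec (d k))) :=
      mul_le_mul_of_nonneg_right hρα hPpos.le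
    have h2 : 0 < α * (h (F (x k)) - h (F (x k) + (A k).mulVec (d k))) := mul_pos hα0 hPpos
    linarith [hared, h1, h2]
  -- the invariants
  have hInv : ∀ k, x k ∈ Ω ∧ 0 < τ k ∧ τ k ≤ τ 0 ∧ 0 < Δ k ∧ Δ k ≤ Δstar ∧
      τ k * Real.sqrt n ≤ Δ k ∧ h (F (x k)) ≤ h (F (x 0)) := by
    intro k
    induction k with
    | zero => exact ⟨hx0, hτ0pos, le_refl _, hΔ0pos, hΔ0star, hΔ0lb, le_refl _⟩
    | succ k ih =>
      obtain ⟨hxk, hτk, hτk0, hΔk, hΔkstar, hτΔ, hfk⟩ := ih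
      rcases hstep k with ⟨_, hx', hΔ', hτ'⟩ | ⟨hη, hdfeas, hdΩ, hfrac, hρdef, hcases⟩
      · rw [hx', hΔ', hτ']
        have hh : τ k / 2 * Real.sqrt n ≤ Δ k := by
          have e : τ k / 2 * Real.sqrt n = τ k * Real.sqrt n / 2 := by ring
          have hpos : 0 < τ k * Real.sqrt n := mul_pos hτk hsq
          rw [e]; linarith
        exact ⟨hxk, by linarith, by linarith, hΔk, hΔkstar, hh, hfk⟩
      · rcases hcases with ⟨hρα, hx', hΔ', hτ'⟩ | ⟨hρα, hτΔ2, hx', hΔ', hτ'⟩ |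
          ⟨hρα, hτΔ2, hx', hΔ', hτ'⟩
        · -- successful
          rw [hx', hΔ', hτ']
          have hdec := hsucc k hxk hΔk hfrac hρdef hρα
          refine ⟨hdΩ, hτk, hτk0, lt_min (by linarith) hΔstarpos,
            min_le_right _ _, le_min (by linarith) (by linarith), by linarith⟩
        · rw [hx', hΔ', hτ']
          exact ⟨hxk, hτk, hτk0, by linarith, by linarith, hτΔ2, hfk⟩
        · rw [hx', hΔ', hτ']
          refine ⟨hxk, by linarith, by linarith, by linarith, by linarith, ?_, hfk⟩
          have : τ k / 2 * Real.sqrt n = τ k * Real.sqrt n / 2 := by ring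
          rw [this]; linarith
  -- key bound on unsuccessful (type II/III) iterations
  have hkey : ∀ k, ε / 2 ≤ eta Ω F h p Δstar (x k) (A k) →
      pNorm p (d k) ≤ Δ k → x k + d k ∈ Ω →
      (θ * (h (F (x k)) - M k (Δ k)) ≤ h (F (x k)) - h (F (x k) + (A k).mulVec (d k))) →
      (ρ k = (h (F (x k)) - h (F (x k + d k))) /
        (h (F (x k)) - h (F (x k) + (A k).mulVec (d k)))) →
      ρ k < α →
      h (F (x k)) - h (F xstar) ≤
        ((LJ / σ + 1) * Δstar * Lh * LJ * cpm * cnp ^ 2 / ((1 - α) * θ)) * Δ k := by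
    intro k hη hdfeas hdΩ hfrac hρdef hρα
    obtain ⟨hxk, hτk, hτk0, hΔk, hΔkstar, hτΔ, hfk⟩ := hInv k
    set W : ℝ := h (F (x k)) - M k Δstar with hW
    have hηW : ε / 2 ≤ Δstar⁻¹ * W := hη
    have hWpos : 0 < W := by
      have h2 : 0 < Δstar * (ε / 2) := mul_pos hΔstarpos (by linarith)
      have h3 : Δstar * (ε / 2) ≤ Δstar * (Δstar⁻¹ * W) :=
        mul_le_mul_of_nonneg_left hηW hΔstarpos.le
      have h4 : Δstar * (Δstar⁻¹ * W) = W := by field_simp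
      linarith
    have hWε : Δstar * ε / 2 ≤ W := by
      calc Δstar * ε / 2 = Δstar * (ε / 2) := by ring
        _ ≤ Δstar * (Δstar⁻¹ * W) := mul_le_mul_of_nonneg_left hηW hΔstarpos.le
        _ = W := by field_simp
    -- (2) predicted decrease lower bound
    have hpred : θ * (Δ k / Δstar) * W ≤
        h (F (x k)) - h (F (x k) + (A k).mulVec (d k)) := by
      have hs := hscale k (Δ k) Δstar hxk hΔk hΔkstar
      calc θ * (Δ k / Δstar) * W = θ * (Δ k / Δstar * W) := by ring
        _ ≤ θ * (h (F (x k)) - M k (Δ k)) := mul_le_mul_of_nonneg_left hs hθ0.le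
        _ ≤ _ := hfrac
    have hPpos : 0 < h (F (x k)) - h (F (x k) + (A k).mulVec (d k)) := by
      have : 0 < θ * (Δ k / Δstar) * W := by positivity
      linarith
    -- (3) ared < α * P
    have hared : h (F (x k)) - h (F (x k + d k))
        < α * (h (F (x k)) - h (F (x k) + (A k).mulVec (d k))) := by
      rw [hρdef] at hρα
      exact (div_lt_iff₀ hPpos).mp hρα
    -- (4) the gap between model and function
    have hd2 : eucNorm (d k) ≤ cnp * Δ k := by
      calc eucNorm (d k) ≤ cnp * pNorm p (d k) := hcnp _
        _ ≤ cnp * Δ k := mul_le_mul_of_nonneg_left hdfeas hcnp0.le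
    have hgapbd : h (F (x k + d k)) - h (F (x k) + (A k).mulVec (d k))
        ≤ Lh * cpm * LJ * cnp ^ 2 * Δ k ^ 2 := by
      have h1 := hgap (F (x k + d k)) (F (x k) + (A k).mulVec (d k))
      have h2 : eucNorm (F (x k + d k) - (F (x k) + (A k).mulVec (d k)))
          ≤ LJ / 2 * eucNorm (d k) ^ 2 + Real.sqrt n * (LJ * τ k / 2) * eucNorm (d k) := by
        have htri := eucNorm_sub_le (F (x k + d k))
          (F (x k) + (J (x k)).mulVec (d k)) (F (x k) + (A k).mulVec (d k))
        have ha : F (x k + d k) - (F (x k) + (J (x k)).mulVec (d k))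
            = F (x k + d k) - F (x k) - (J (x k)).mulVec (d k) := by abel
        have hb : (F (x k) + (J (x k)).mulVec (d k)) - (F (x k) + (A k).mulVec (d k))
            = -((A k - J (x k)).mulVec (d k)) := by
          rw [Matrix.sub_mulVec]; abel
        rw [ha, hb, eucNorm_neg] at htri
        have hq := hquad (x k) (d k)
        have hfd : eucNorm ((A k - J (x k)).mulVec (d k))
            ≤ Real.sqrt n * (LJ * τ k / 2) * eucNorm (d k) := by
          rw [hA k]
          exact fd_err F J LJ hLJ hquad hτk (d k)
        linarith
      have h3 : LJ / 2 * eucNorm (d k) ^ 2 ≤ LJ / 2 * (cnp * Δ k) ^ 2 := by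
        apply mul_le_mul_of_nonneg_left _ (by positivity)
        exact pow_le_pow_left₀ (eucNorm_nonneg _) hd2 2
      have h4 : Real.sqrt n * (LJ * τ k / 2) * eucNorm (d k)
          ≤ Δ k * (LJ / 2) * (cnp * Δ k) := by
        have h5 : Real.sqrt n * (LJ * τ k / 2) = τ k * Real.sqrt n * (LJ / 2) := by ring
        rw [h5]
        apply mul_le_mul (mul_le_mul_of_nonneg_right hτΔ (by positivity))
          hd2 (eucNorm_nonneg _) (by positivity)
      have h6 : Lh * cpm * eucNorm (F (x k + d k) - (F (x k) + (A k).mulVec (d k)))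
          ≤ Lh * cpm * (LJ / 2 * (cnp * Δ k) ^ 2 + Δ k * (LJ / 2) * (cnp * Δ k)) := by
        apply mul_le_mul_of_nonneg_left _ (by positivity)
        linarith
      have h7 : Lh * cpm * (LJ / 2 * (cnp * Δ k) ^ 2 + Δ k * (LJ / 2) * (cnp * Δ k))
          ≤ Lh * cpm * LJ * cnp ^ 2 * Δ k ^ 2 := by
        have hcc : cnp ^ 2 + cnp ≤ 2 * cnp ^ 2 := by
          have h1 : 1 * cnp ≤ cnp * cnp := mul_le_mul_of_nonneg_right hcnp1 hcnp0.le
          have h2 : cnp * cnp = cnp ^ 2 := (sq cnp).symm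
          linarith
        calc Lh * cpm * (LJ / 2 * (cnp * Δ k) ^ 2 + Δ k * (LJ / 2) * (cnp * Δ k))
            = Lh * cpm * (LJ / 2) * Δ k ^ 2 * (cnp ^ 2 + cnp) := by ring
          _ ≤ Lh * cpm * (LJ / 2) * Δ k ^ 2 * (2 * cnp ^ 2) :=
              mul_le_mul_of_nonneg_left hcc (by positivity)
          _ = Lh * cpm * LJ * cnp ^ 2 * Δ k ^ 2 := by ring
      linarith
    -- (5)-(6): bound on W
    have hWbd : (1 - α) * θ * (Δ k / Δstar) * W ≤ Lh * cpm * LJ * cnp ^ 2 * Δ k ^ 2 := by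
      have hα' : (0:ℝ) ≤ 1 - α := by linarith
      have s1 : (1 - α) * (θ * (Δ k / Δstar) * W)
          ≤ (1 - α) * (h (F (x k)) - h (F (x k) + (A k).mulVec (d k))) :=
        mul_le_mul_of_nonneg_left hpred hα'
      have s2 : (1 - α) * (h (F (x k)) - h (F (x k) + (A k).mulVec (d k)))
          = (h (F (x k)) - h (F (x k) + (A k).mulVec (d k)))
            - α * (h (F (x k)) - h (F (x k) + (A k).mulVec (d k))) := by ring
      have s3 : (1 - α) * θ * (Δ k / Δstar) * W
          = (1 - α) * (θ * (Δ k / Δstar) * W) := by ring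
      rw [s3]
      linarith [s1, hared, hgapbd, s2]
    have hWbd2 : W ≤ Δstar * Lh * LJ * cpm * cnp ^ 2 * Δ k / ((1 - α) * θ) := by
      rw [le_div_iff₀ (by nlinarith : (0:ℝ) < (1 - α) * θ)]
      have e1 : (1 - α) * θ * (Δ k / Δstar) * W
          = (W * ((1 - α) * θ)) * (Δ k / Δstar) := by ring
      have e2 := hWbd
      rw [e1] at e2
      have e3 : W * ((1 - α) * θ) = ((W * ((1 - α) * θ)) * (Δ k / Δstar)) * (Δstar / Δ k) := by
        field_simp
      rw [e3]
      calc ((W * ((1 - α) * θ)) * (Δ k / Δstar)) * (Δstar / Δ k)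
          ≤ (Lh * cpm * LJ * cnp ^ 2 * Δ k ^ 2) * (Δstar / Δ k) :=
            mul_le_mul_of_nonneg_right e2 (by positivity)
        _ = Δstar * Lh * LJ * cpm * cnp ^ 2 * Δ k := by field_simp
    -- (7): bound M k Δstar from below via xstar
    have hsstar : M k Δstar ≤ h (F xstar) + LJ * ε * Δstar / (2 * σ) := by
      set s : Fin n → ℝ := xstar - x k with hs
      have hfeas1 : x k + s ∈ Ω := by
        have : x k + s = xstar := by rw [hs]; abel
        rw [this]; exact hxstarΩ
      have hfeas2 : pNorm p s ≤ Δstar := by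
        have hd0 := hD₀ (x k) hxk hfk
        have : pNorm p s = pNorm p (x k - xstar) := by
          rw [hs, show xstar - x k = -(x k - xstar) by abel, pNorm_neg]
        rw [this]
        linarith
      have h1 : M k Δstar ≤ h (F (x k) + (A k).mulVec s) :=
        hMle k Δstar s hΔstarpos.le hfeas1 hfeas2
      have h2 : h (F (x k) + (A k).mulVec s) - h (F (x k) + (J (x k)).mulVec s)
          ≤ Lh * cpm * eucNorm ((A k - J (x k)).mulVec s) := by
        have := hgap (F (x k) + (A k).mulVec s) (F (x k) + (J (x k)).mulVec s)
        have he : (F (x k) + (A k).mulVec s) - (F (x k) + (J (x k)).mulVec s)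
            = (A k - J (x k)).mulVec s := by rw [Matrix.sub_mulVec]; abel
        rwa [he] at this
      have h3 : eucNorm ((A k - J (x k)).mulVec s)
          ≤ Real.sqrt n * (LJ * τ k / 2) * (cnp * Δstar) := by
        calc eucNorm ((A k - J (x k)).mulVec s)
            ≤ Real.sqrt n * (LJ * τ k / 2) * eucNorm s := by
              rw [hA k]; exact fd_err F J LJ hLJ hquad hτk s
          _ ≤ Real.sqrt n * (LJ * τ k / 2) * (cnp * Δstar) := by
              apply mul_le_mul_of_nonneg_left _ (by positivity)
              calc eucNorm s ≤ cnp * pNorm p s := hcnp s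
                _ ≤ cnp * Δstar := mul_le_mul_of_nonneg_left hfeas2 hcnp0.le
      have hτ0n : Real.sqrt n * τ 0 = ε / (Lh * σ * cpm * cnp) := by
        rw [hτ0def]; field_simp
      have h4 : Real.sqrt n * (LJ * τ k / 2) * (cnp * Δstar) * (Lh * cpm)
          ≤ LJ * ε * Δstar / (2 * σ) := by
        have h5 : Real.sqrt n * τ k ≤ ε / (Lh * σ * cpm * cnp) := by
          rw [← hτ0n]
          exact mul_le_mul_of_nonneg_left hτk0 hsq.le
        have e1 : Real.sqrt n * (LJ * τ k / 2) * (cnp * Δstar) * (Lh * cpm)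
            = (Real.sqrt n * τ k) * (LJ / 2 * cnp * Δstar * Lh * cpm) := by ring
        rw [e1]
        calc (Real.sqrt n * τ k) * (LJ / 2 * cnp * Δstar * Lh * cpm)
            ≤ (ε / (Lh * σ * cpm * cnp)) * (LJ / 2 * cnp * Δstar * Lh * cpm) :=
              mul_le_mul_of_nonneg_right h5 (by positivity)
          _ = LJ * ε * Δstar / (2 * σ) := by field_simp
      have h6 : h (F (x k) + (J (x k)).mulVec s) ≤ h (F xstar) := by
        apply hmono
        intro i
        have := grad_ineq F J hJ hFconv (x k) xstar i
        rw [← hs] at this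
        simpa using this
      have h7 : Lh * cpm * eucNorm ((A k - J (x k)).mulVec s)
          ≤ LJ * ε * Δstar / (2 * σ) := by
        calc Lh * cpm * eucNorm ((A k - J (x k)).mulVec s)
            ≤ Lh * cpm * (Real.sqrt n * (LJ * τ k / 2) * (cnp * Δstar)) :=
              mul_le_mul_of_nonneg_left h3 (by positivity)
          _ = Real.sqrt n * (LJ * τ k / 2) * (cnp * Δstar) * (Lh * cpm) := by ring
          _ ≤ LJ * ε * Δstar / (2 * σ) := h4
      linarith
    -- (8): conclude
    have h8 : LJ * ε * Δstar / (2 * σ) ≤ (LJ / σ) * W := by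
      have : LJ * ε * Δstar / (2 * σ) = (LJ / σ) * (Δstar * ε / 2) := by field_simp
      rw [this]
      exact mul_le_mul_of_nonneg_left hWε (by positivity)
    have h9 : h (F (x k)) - h (F xstar) ≤ (1 + LJ / σ) * W := by
      have : h (F (x k)) - h (F xstar) = W + (M k Δstar - h (F xstar)) := by rw [hW]; ring
      rw [this]
      have : M k Δstar - h (F xstar) ≤ LJ * ε * Δstar / (2 * σ) := by linarith
      linarith [h8, this]
    calc h (F (x k)) - h (F xstar) ≤ (1 + LJ / σ) * W := h9
      _ ≤ (1 + LJ / σ) * (Δstar * Lh * LJ * cpm * cnp ^ 2 * Δ k / ((1 - α) * θ)) :=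
          mul_le_mul_of_nonneg_left hWbd2 (by positivity)
      _ = ((LJ / σ + 1) * Δstar * Lh * LJ * cpm * cnp ^ 2 / ((1 - α) * θ)) * Δ k := by
          field_simp; ring
  -- main induction
  have hB : ∀ k, (Δ k)⁻¹ * (h (F (x k)) - h (F xstar)) ≤
      max ((Δ 0)⁻¹ * (h (F (x 0)) - h (F xstar)))
        (2 * (LJ / σ + 1) * Δstar * Lh * LJ * cpm * cnp ^ 2 / ((1 - α) * θ)) := by
    intro k
    induction k with
    | zero => exact le_max_left _ _
    | succ k ih =>
      obtain ⟨hxk, hτk, hτk0, hΔk, hΔkstar, hτΔ, hfk⟩ := hInv k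
      rcases hstep k with ⟨_, hx', hΔ', hτ'⟩ | ⟨hη, hdfeas, hdΩ, hfrac, hρdef, hcases⟩
      · rw [hx', hΔ']; exact ih
      · rcases hcases with ⟨hρα, hx', hΔ', hτ'⟩ | ⟨hρα, hτΔ2, hx', hΔ', hτ'⟩ |
          ⟨hρα, hτΔ2, hx', hΔ', hτ'⟩
        · -- successful
          rw [hx', hΔ']
          have hdec := hsucc k hxk hΔk hfrac hρdef hρα
          have hΔ1 : Δ k ≤ min (2 * Δ k) Δstar := le_min (by linarith) hΔkstar
          have hΔ1pos : 0 < min (2 * Δ k) Δstar := lt_min (by linarith) hΔstarpos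
          have hg0 : 0 ≤ h (F (x k + d k)) - h (F xstar) := by
            have := hxstarmin (x k + d k) hdΩ
            linarith
          calc (min (2 * Δ k) Δstar)⁻¹ * (h (F (x k + d k)) - h (F xstar))
              ≤ (Δ k)⁻¹ * (h (F (x k)) - h (F xstar)) := by
                apply mul_le_mul
                · exact inv_anti₀ hΔk hΔ1
                · linarith
                · exact hg0
                · positivity
            _ ≤ _ := ih
        · -- U2
          rw [hx', hΔ']
          have hKb := hkey k hη hdfeas hdΩ hfrac hρdef hρα
          have : (Δ k / 2)⁻¹ * (h (F (x k)) - h (F xstar))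
              ≤ 2 * ((LJ / σ + 1) * Δstar * Lh * LJ * cpm * cnp ^ 2 / ((1 - α) * θ)) := by
            rw [show (Δ k / 2)⁻¹ = 2 * (Δ k)⁻¹ by field_simp]
            have h1 : (Δ k)⁻¹ * (h (F (x k)) - h (F xstar))
                ≤ (LJ / σ + 1) * Δstar * Lh * LJ * cpm * cnp ^ 2 / ((1 - α) * θ) := by
              rw [inv_mul_le_iff₀ hΔk]
              calc h (F (x k)) - h (F xstar)
                  ≤ ((LJ / σ + 1) * Δstar * Lh * LJ * cpm * cnp ^ 2 / ((1 - α) * θ)) * Δ k :=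
                    hKb
                _ = Δ k * ((LJ / σ + 1) * Δstar * Lh * LJ * cpm * cnp ^ 2 / ((1 - α) * θ)) := by
                    ring
            calc 2 * (Δ k)⁻¹ * (h (F (x k)) - h (F xstar))
                = 2 * ((Δ k)⁻¹ * (h (F (x k)) - h (F xstar))) := by ring
              _ ≤ 2 * ((LJ / σ + 1) * Δstar * Lh * LJ * cpm * cnp ^ 2 / ((1 - α) * θ)) := by
                  linarith
          calc (Δ k / 2)⁻¹ * (h (F (x k)) - h (F xstar))
              ≤ 2 * ((LJ / σ + 1) * Δstar * Lh * LJ * cpm * cnp ^ 2 / ((1 - α) * θ)) := this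
            _ = 2 * (LJ / σ + 1) * Δstar * Lh * LJ * cpm * cnp ^ 2 / ((1 - α) * θ) := by ring
            _ ≤ _ := le_max_right _ _
        · -- U3 (same as U2)
          rw [hx', hΔ']
          have hKb := hkey k hη hdfeas hdΩ hfrac hρdef hρα
          have : (Δ k / 2)⁻¹ * (h (F (x k)) - h (F xstar))
              ≤ 2 * ((LJ / σ + 1) * Δstar * Lh * LJ * cpm * cnp ^ 2 / ((1 - α) * θ)) := by
            rw [show (Δ k / 2)⁻¹ = 2 * (Δ k)⁻¹ by field_simp]
            have h1 : (Δ k)⁻¹ * (h (F (x k)) - h (F xstar))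
                ≤ (LJ / σ + 1) * Δstar * Lh * LJ * cpm * cnp ^ 2 / ((1 - α) * θ) := by
              rw [inv_mul_le_iff₀ hΔk]
              calc h (F (x k)) - h (F xstar)
                  ≤ ((LJ / σ + 1) * Δstar * Lh * LJ * cpm * cnp ^ 2 / ((1 - α) * θ)) * Δ k :=
                    hKb
                _ = Δ k * ((LJ / σ + 1) * Δstar * Lh * LJ * cpm * cnp ^ 2 / ((1 - α) * θ)) := by
                    ring
            calc 2 * (Δ k)⁻¹ * (h (F (x k)) - h (F xstar))
                = 2 * ((Δ k)⁻¹ * (h (F (x k)) - h (F xstar))) := by ring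
              _ ≤ 2 * ((LJ / σ + 1) * Δstar * Lh * LJ * cpm * cnp ^ 2 / ((1 - α) * θ)) := by
                  linarith
          calc (Δ k / 2)⁻¹ * (h (F (x k)) - h (F xstar))
              ≤ 2 * ((LJ / σ + 1) * Δstar * Lh * LJ * cpm * cnp ^ 2 / ((1 - α) * θ)) := this
            _ = 2 * (LJ / σ + 1) * Δstar * Lh * LJ * cpm * cnp ^ 2 / ((1 - α) * θ) := by ring
            _ ≤ _ := le_max_right _ _
  intro k _
  exact hB k
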